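/- arXiv:1802.08887 — 3 statements merged into one kernel-verified Lean document; each statement's English description precedes it below -/
import Mathlib

section
/- For every function u : Σ_A × Σ_B → ℝ such that f*(u(x_A,x_B)) is finite for all (x_A,x_B), one has MI^f(X_A;X_B) ≥ Σ_{x_A,x_B} Pr[X_A=x_A, X_B=x_B]·u(x_A,x_B) − Σ_{x_A,x_B} Pr[X_A=x_A]·Pr[X_B=x_B]·f*(u(x_A,x_B)), and equality holds if and only if for every pair (x_A,x_B) the number u(x_A,x_B) is a subgradient of f at K(x_A,x_B). -/
noncomputable section

/-- The convex conjugate `f*(x) = sup_t (t·x − f(t))`, as a real-valued supremum. -/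
def fconj (f : ℝ → ℝ) (x : ℝ) : ℝ := sSup (Set.range fun t => t * x - f t)

/-- `c` is a subgradient of `f` at `t`: `f(s) ≥ f(t) + c·(s − t)` for all `s`. -/
def IsSubgradientAt (f : ℝ → ℝ) (t c : ℝ) : Prop := ∀ s : ℝ, f t + c * (s - t) ≤ f s

variable {SA SB : Type*}

/-- Marginal probability `Pr[X_A = a]` of the joint pmf `μ`. -/
def mA [Fintype SB] (μ : SA → SB → ℝ) (a : SA) : ℝ := ∑ b, μ a b

/-- Marginal probability `Pr[X_B = b]` of the joint pmf `μ`. -/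
def mB [Fintype SA] (μ : SA → SB → ℝ) (b : SB) : ℝ := ∑ a, μ a b

/-- Pointwise mutual information `K(a,b) = Pr[a,b]/(Pr[a]·Pr[b])`. -/
def Kp [Fintype SA] [Fintype SB] (μ : SA → SB → ℝ) (a : SA) (b : SB) : ℝ :=
  μ a b / (mA μ a * mB μ b)

/-- The f-mutual information `MI^f(X_A;X_B) = Σ_{a,b} Pr[a]·Pr[b]·f(K(a,b))`. -/
def MIp [Fintype SA] [Fintype SB] (f : ℝ → ℝ) (μ : SA → SB → ℝ) : ℝ :=
  ∑ a, ∑ b, mA μ a * mB μ b * f (Kp μ a b)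

/-- Dual version of `f`-mutual information: for every `u : Σ_A × Σ_B → ℝ` with
`f*(u(a,b))` finite everywhere,
`MI^f(X_A;X_B) ≥ Σ Pr[a,b]·u(a,b) − Σ Pr[a]·Pr[b]·f*(u(a,b))`,
with equality iff `u(a,b)` is a subgradient of `f` at `K(a,b)` for every `(a,b)`. -/
theorem stmt_1 [Fintype SA] [Fintype SB] [Nonempty SA] [Nonempty SB]
    (μ : SA → SB → ℝ) (hμ0 : ∀ a b, 0 ≤ μ a b) (hμ1 : ∑ a, ∑ b, μ a b = 1)
    (hmA : ∀ a, 0 < mA μ a) (hmB : ∀ b, 0 < mB μ b)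
    (f : ℝ → ℝ) (hf : ConvexOn ℝ Set.univ f) (hf1 : f 1 = 0)
    (u : SA → SB → ℝ)
    (hu : ∀ a b, BddAbove (Set.range fun t => t * u a b - f t)) :
    (MIp f μ ≥ ∑ a, ∑ b, μ a b * u a b - ∑ a, ∑ b, mA μ a * mB μ b * fconj f (u a b))
    ∧ ((MIp f μ = ∑ a, ∑ b, μ a b * u a b - ∑ a, ∑ b, mA μ a * mB μ b * fconj f (u a b))
      ↔ ∀ a b, IsSubgradientAt f (Kp μ a b) (u a b)) := by
  have hP : ∀ a b, 0 < mA μ a * mB μ b := fun a b => mul_pos (hmA a) (hmB b)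
  have hμeq : ∀ a b, μ a b = mA μ a * mB μ b * Kp μ a b := by
    intro a b
    rw [Kp, mul_comm, div_mul_cancel₀ _ (hP a b).ne']
  have key : ∀ a b,
      (μ a b * u a b - mA μ a * mB μ b * fconj f (u a b)
        ≤ mA μ a * mB μ b * f (Kp μ a b))
      ∧ ((μ a b * u a b - mA μ a * mB μ b * fconj f (u a b)
        = mA μ a * mB μ b * f (Kp μ a b)) ↔ IsSubgradientAt f (Kp μ a b) (u a b)) := by
    intro a b
    have hPab := hP a b
    set P := mA μ a * mB μ b with hPdef
    set K := Kp μ a b with hKdef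
    set x := u a b with hxdef
    have h1 : K * x - f K ≤ fconj f x := le_csSup (hu a b) ⟨K, rfl⟩
    have h2 : fconj f x ≤ K * x - f K ↔ IsSubgradientAt f K x := by
      rw [fconj, csSup_le_iff (hu a b) (Set.range_nonempty _)]
      constructor
      · intro h s
        have := h (s * x - f s) ⟨s, rfl⟩
        nlinarith
      · rintro h y ⟨s, rfl⟩
        have := h s
        simp only
        nlinarith
    have hPK : μ a b = P * K := hμeq a b
    constructor
    · rw [hPK]
      nlinarith
    · rw [hPK]
      constructor
      · intro h
        apply h2.mp
        nlinarith
      · intro h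
        have heq : fconj f x = K * x - f K := le_antisymm (h2.mpr h) h1
        rw [heq]
        ring
  have hsum : (∑ a, ∑ b, μ a b * u a b) - ∑ a, ∑ b, mA μ a * mB μ b * fconj f (u a b)
      = ∑ a, ∑ b, (μ a b * u a b - mA μ a * mB μ b * fconj f (u a b)) := by
    rw [← Finset.sum_sub_distrib]
    congr 1
    ext a
    rw [← Finset.sum_sub_distrib]
  have hle : ∀ a ∈ (Finset.univ : Finset SA), ∀ b ∈ (Finset.univ : Finset SB),
      μ a b * u a b - mA μ a * mB μ b * fconj f (u a b)
        ≤ mA μ a * mB μ b * f (Kp μ a b) := fun a _ b _ => (key a b).1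
  constructor
  · rw [ge_iff_le, hsum, MIp]
    exact Finset.sum_le_sum fun a _ => Finset.sum_le_sum fun b _ => (key a b).1
  · rw [MIp, hsum, eq_comm,
      Finset.sum_eq_sum_iff_of_le (fun a _ => Finset.sum_le_sum fun b _ => (key a b).1)]
    constructor
    · intro h a b
      have := (Finset.sum_eq_sum_iff_of_le fun b _ => (key a b).1).mp
        (h a (Finset.mem_univ a)) b (Finset.mem_univ b)
      exact (key a b).2.mp this
    · intro h a _
      exact (Finset.sum_eq_sum_iff_of_le fun b _ => (key a b).1).mpr
        fun b _ => (key a b).2.mpr (h a b)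
end
end

section
/- For every pair of hypotheses h_A : Σ_A → Δ_Σ, h_B : Σ_B → Δ_Σ and every reward function R : Δ_Σ × Δ_Σ → ℝ such that f*(R(h_A(x_A), h_B(x_B))) is finite for all (x_A,x_B), the expected f-mutual information gain Σ_{x_A,x_B} Pr[X_A=x_A, X_B=x_B]·R(h_A(x_A), h_B(x_B)) − Σ_{x_A,x_B} Pr[X_A=x_A]·Pr[X_B=x_B]·f*(R(h_A(x_A), h_B(x_B))) is at most MI^f(X_A;X_B), and it equals MI^f(X_A;X_B) if and only if for every (x_A,x_B) the number R(h_A(x_A), h_B(x_B)) is a subgradient of f at K(x_A,x_B). -/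
noncomputable section

/-- `p` is a probability vector: nonnegative entries summing to `1`. -/
def IsProbVec {T : Type*} [Fintype T] (p : T → ℝ) : Prop := (∀ t, 0 ≤ p t) ∧ ∑ t, p t = 1

lemma fy_aux (f : ℝ → ℝ) (x K : ℝ) (h : BddAbove (Set.range fun t => t * x - f t)) :
    K * x - f K ≤ fconj f x := le_csSup h ⟨K, rfl⟩

lemma fconj_eq_iff_aux (f : ℝ → ℝ) (x K : ℝ)
    (h : BddAbove (Set.range fun t => t * x - f t)) :
    fconj f x = K * x - f K ↔ IsSubgradientAt f K x := by
  constructor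
  · intro he s
    have h1 : s * x - f s ≤ fconj f x := le_csSup h ⟨s, rfl⟩
    rw [he] at h1
    nlinarith
  · intro hs
    refine le_antisymm ?_ (fy_aux f x K h)
    refine csSup_le (Set.range_nonempty _) ?_
    rintro y ⟨s, rfl⟩
    have h1 := hs s
    have h2 : x * (s - K) = s * x - K * x := by ring
    show s * x - f s ≤ K * x - f K
    linarith

variable {SA SB S : Type*}

/-- Lemma 4.1: for any hypotheses `h_A : Σ_A → Δ_Σ`, `h_B : Σ_B → Δ_Σ` and any reward
function `R : Δ_Σ × Δ_Σ → ℝ` with `f*(R(h_A(a), h_B(b)))` finite everywhere, the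
expected `f`-mutual information gain
`Σ Pr[a,b]·R(h_A(a),h_B(b)) − Σ Pr[a]·Pr[b]·f*(R(h_A(a),h_B(b)))` is at most
`MI^f(X_A;X_B)`, with equality iff `R(h_A(a),h_B(b))` is a subgradient of `f` at
`K(a,b)` for every `(a,b)`. -/
theorem stmt_3 [Fintype SA] [Fintype SB] [Fintype S] [Nonempty SA] [Nonempty SB] [Nonempty S]
    (μ : SA → SB → ℝ) (hμ0 : ∀ a b, 0 ≤ μ a b) (hμ1 : ∑ a, ∑ b, μ a b = 1)
    (hmA : ∀ a, 0 < mA μ a) (hmB : ∀ b, 0 < mB μ b)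
    (f : ℝ → ℝ) (hf : ConvexOn ℝ Set.univ f) (hf1 : f 1 = 0)
    (hA : SA → S → ℝ) (hB : SB → S → ℝ)
    (hhA : ∀ a, IsProbVec (hA a)) (hhB : ∀ b, IsProbVec (hB b))
    (R : (S → ℝ) → (S → ℝ) → ℝ)
    (hfin : ∀ a b, BddAbove (Set.range fun t => t * R (hA a) (hB b) - f t)) :
    (∑ a, ∑ b, μ a b * R (hA a) (hB b)
        - ∑ a, ∑ b, mA μ a * mB μ b * fconj f (R (hA a) (hB b))
      ≤ MIp f μ)
    ∧ ((∑ a, ∑ b, μ a b * R (hA a) (hB b)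
        - ∑ a, ∑ b, mA μ a * mB μ b * fconj f (R (hA a) (hB b))
      = MIp f μ)
      ↔ ∀ a b, IsSubgradientAt f (Kp μ a b) (R (hA a) (hB b))) := by
  set x := fun (a : SA) (b : SB) => R (hA a) (hB b) with hx
  set g := fun (a : SA) (b : SB) =>
    mA μ a * mB μ b * (f (Kp μ a b) + fconj f (x a b) - Kp μ a b * x a b) with hgdef
  have hp : ∀ (a : SA) (b : SB), (0:ℝ) < mA μ a * mB μ b := fun a b => mul_pos (hmA a) (hmB b)
  have hμK : ∀ (a : SA) (b : SB), mA μ a * mB μ b * Kp μ a b = μ a b := by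
    intro a b
    have h := (hp a b).ne'
    rw [Kp]
    field_simp
    exact mul_div_cancel_left₀ _ h
  have hexp : ∀ (a : SA) (b : SB), g a b =
      mA μ a * mB μ b * f (Kp μ a b) + mA μ a * mB μ b * fconj f (x a b) - μ a b * x a b := by
    intro a b
    simp only [hgdef]
    linear_combination (-(x a b)) * hμK a b
  have hsum : MIp f μ + (∑ a, ∑ b, mA μ a * mB μ b * fconj f (x a b))
      - (∑ a, ∑ b, μ a b * x a b) = ∑ a, ∑ b, g a b := by
    simp only [MIp, ← Finset.sum_add_distrib, ← Finset.sum_sub_distrib]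
    exact Finset.sum_congr rfl fun a _ => Finset.sum_congr rfl fun b _ => (hexp a b).symm
  have hg0 : ∀ (a : SA) (b : SB), 0 ≤ g a b := by
    intro a b
    have h1 := fy_aux f (x a b) (Kp μ a b) (hfin a b)
    have h2 := (hp a b).le
    simp only [hgdef]
    nlinarith
  have hsum0 : (0:ℝ) ≤ ∑ a, ∑ b, g a b :=
    Finset.sum_nonneg fun a _ => Finset.sum_nonneg fun b _ => hg0 a b
  constructor
  · linarith
  · constructor
    · intro heq a b
      have hz : ∑ a, ∑ b, g a b = 0 := by linarith
      have hall : ∀ a ∈ Finset.univ, ∑ b, g a b = 0 := by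
        rw [← Finset.sum_eq_zero_iff_of_nonneg
          (fun a _ => Finset.sum_nonneg fun b _ => hg0 a b)]
        exact hz
      have hab : g a b = 0 := by
        have := (Finset.sum_eq_zero_iff_of_nonneg (fun b _ => hg0 a b)).mp
          (hall a (Finset.mem_univ a)) b (Finset.mem_univ b)
        exact this
      have hpne : mA μ a * mB μ b ≠ 0 := (hp a b).ne'
      have hinner : f (Kp μ a b) + fconj f (x a b) - Kp μ a b * x a b = 0 := by
        rcases mul_eq_zero.mp hab with h | h
        · exact absurd h hpne
        · exact h
      exact (fconj_eq_iff_aux f (x a b) (Kp μ a b) (hfin a b)).mp (by linarith)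
    · intro hsub
      have hz : ∀ (a : SA) (b : SB), g a b = 0 := by
        intro a b
        have h1 := (fconj_eq_iff_aux f (x a b) (Kp μ a b) (hfin a b)).mpr (hsub a b)
        simp only [hgdef]
        linear_combination (mA μ a * mB μ b) * h1
      have : ∑ a, ∑ b, g a b = 0 := by
        simp only [hz, Finset.sum_const_zero]
      linarith
end
end

section
/- If X_A and X_B are conditionally independent given Y, then Σ_{x_A,x_B} Pr[X_A=x_A, X_B=x_B]·log(Σ_y Pr[Y=y|X_A=x_A]·Pr[Y=y|X_B=x_B]/Pr[Y=y]) = Σ_{x_A,x_B} Pr[X_A=x_A, X_B=x_B]·log(Pr[X_A=x_A, X_B=x_B]/(Pr[X_A=x_A]·Pr[X_B=x_B])), i.e., the honest expected payment of the common ground mechanism equals the Shannon mutual information I(X_A;X_B). -/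
noncomputable section

variable {SA SB S : Type*}

/-- Joint probability `Pr[X_A = a, X_B = b]` induced by the joint pmf `ν` of `(X_A, X_B, Y)`. -/
def jAB [Fintype S] (ν : SA → SB → S → ℝ) (a : SA) (b : SB) : ℝ := ∑ y, ν a b y

/-- Joint probability `Pr[X_A = a, Y = y]`. -/
def jAY [Fintype SB] (ν : SA → SB → S → ℝ) (a : SA) (y : S) : ℝ := ∑ b, ν a b y

/-- Joint probability `Pr[X_B = b, Y = y]`. -/
def jBY [Fintype SA] (ν : SA → SB → S → ℝ) (b : SB) (y : S) : ℝ := ∑ a, ν a b y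

/-- Marginal probability `Pr[X_A = a]`. -/
def prA [Fintype SB] [Fintype S] (ν : SA → SB → S → ℝ) (a : SA) : ℝ := ∑ b, ∑ y, ν a b y

/-- Marginal probability `Pr[X_B = b]`. -/
def prB [Fintype SA] [Fintype S] (ν : SA → SB → S → ℝ) (b : SB) : ℝ := ∑ a, ∑ y, ν a b y

/-- Marginal probability `Pr[Y = y]`. -/
def prY [Fintype SA] [Fintype SB] (ν : SA → SB → S → ℝ) (y : S) : ℝ := ∑ a, ∑ b, ν a b y

/-- Pointwise mutual information `K(a,b) = Pr[a,b]/(Pr[a]·Pr[b])`. -/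
def K [Fintype SA] [Fintype SB] [Fintype S] (ν : SA → SB → S → ℝ) (a : SA) (b : SB) : ℝ :=
  jAB ν a b / (prA ν a * prB ν b)

/-- Conditional probability `Pr[Y = y | X_A = a]`. -/
def condA [Fintype SB] [Fintype S] (ν : SA → SB → S → ℝ) (a : SA) (y : S) : ℝ :=
  jAY ν a y / prA ν a

/-- Conditional probability `Pr[Y = y | X_B = b]`. -/
def condB [Fintype SA] [Fintype S] (ν : SA → SB → S → ℝ) (b : SB) (y : S) : ℝ :=
  jBY ν b y / prB ν b

/-- `X_A` and `X_B` are conditionally independent given `Y`: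
`Pr[a, b | y] = Pr[a | y] · Pr[b | y]` for all `a, b, y`. -/
def CondIndep [Fintype SA] [Fintype SB] (ν : SA → SB → S → ℝ) : Prop :=
  ∀ a b y, ν a b y / prY ν y = (jAY ν a y / prY ν y) * (jBY ν b y / prY ν y)

/-- `ν` is a probability mass function. -/
def IsPMF [Fintype SA] [Fintype SB] [Fintype S] (ν : SA → SB → S → ℝ) : Prop :=
  (∀ a b y, 0 ≤ ν a b y) ∧ ∑ a, ∑ b, ∑ y, ν a b y = 1

/-- The f-mutual information `MI^f(X_A;X_B) = Σ_{a,b} Pr[a]·Pr[b]·f(K(a,b))`. -/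
def MIf [Fintype SA] [Fintype SB] [Fintype S] (f : ℝ → ℝ) (ν : SA → SB → S → ℝ) : ℝ :=
  ∑ a, ∑ b, prA ν a * prB ν b * f (K ν a b)

/-- The agreement `g(a,b) = Σ_y h_A(a)(y)·h_B(b)(y)/p(y)`. -/
def gagr [Fintype S] (hA : SA → S → ℝ) (hB : SB → S → ℝ) (p : S → ℝ) (a : SA) (b : SB) : ℝ :=
  ∑ y, hA a y * hB b y / p y

/-- Expected `f`-mutual information gain
`MIG^f(h_A,h_B,p) = Σ Pr[a,b]·f'(g(a,b)) − Σ Pr[a]·Pr[b]·f*(f'(g(a,b)))`. -/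
def MIG [Fintype SA] [Fintype SB] [Fintype S] (f : ℝ → ℝ) (ν : SA → SB → S → ℝ)
    (hA : SA → S → ℝ) (hB : SB → S → ℝ) (p : S → ℝ) : ℝ :=
  ∑ a, ∑ b, jAB ν a b * deriv f (gagr hA hB p a b)
    - ∑ a, ∑ b, prA ν a * prB ν b * fconj f (deriv f (gagr hA hB p a b))

/-- Each agent's expected payment in the multi-task common ground mechanism `MCG(f)`. -/
def Pay [Fintype SA] [Fintype SB] [Fintype S] (f : ℝ → ℝ) (ν : SA → SB → S → ℝ)
    (sA : SA → S → ℝ) (sB : SB → S → ℝ) : ℝ :=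
  MIG f ν sA sB (prY ν)

/-- `({a^{x_A}}, {b^{x_B}}, r)` is a solution of the agreement system:
probability vectors, `r` strictly positive, with
`Σ_y a^{x_A}(y)·b^{x_B}(y)/r(y) = K(x_A,x_B)` for all `x_A, x_B`. -/
def AgreementSolution [Fintype SA] [Fintype SB] [Fintype S] (ν : SA → SB → S → ℝ)
    (a : SA → S → ℝ) (b : SB → S → ℝ) (r : S → ℝ) : Prop :=
  (∀ xa, IsProbVec (a xa)) ∧ (∀ xb, IsProbVec (b xb)) ∧ IsProbVec r ∧ (∀ y, 0 < r y) ∧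
    ∀ xa xb, (∑ y, a xa y * b xb y / r y) = K ν xa xb

/-- The prior is well-defined: any two solutions of the agreement system coincide
up to a permutation of `Σ`. -/
def WellDefinedPrior [Fintype SA] [Fintype SB] [Fintype S] (ν : SA → SB → S → ℝ) : Prop :=
  ∀ (a : SA → S → ℝ) (b : SB → S → ℝ) (r : S → ℝ)
    (c : SA → S → ℝ) (d : SB → S → ℝ) (r' : S → ℝ),
    AgreementSolution ν a b r → AgreementSolution ν c d r' →
    ∃ π : Equiv.Perm S, ∀ y, r (π y) = r' y ∧ (∀ xa, a xa (π y) = c xa y)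
      ∧ (∀ xb, b xb (π y) = d xb y)

/-- The prior is stable: fixing the truthful `A`-side (resp. `B`-side) of the agreement
system, the only solution for the other side is the truthful one. -/
def StablePrior [Fintype SA] [Fintype SB] [Fintype S] (ν : SA → SB → S → ℝ) : Prop :=
  (∀ b : SB → S → ℝ, (∀ xb, IsProbVec (b xb)) →
    (∀ xa xb, (∑ y, condA ν xa y * b xb y / prY ν y) = K ν xa xb) →
    ∀ xb y, b xb y = condB ν xb y) ∧
  (∀ a : SA → S → ℝ, (∀ xa, IsProbVec (a xa)) →
    (∀ xa xb, (∑ y, a xa y * condB ν xb y / prY ν y) = K ν xa xb) →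
    ∀ xa y, a xa y = condA ν xa y)

/-- Under conditional independence, the honest expected payment of the common ground
mechanism equals the Shannon mutual information `I(X_A;X_B)`. -/
theorem stmt_10 [Fintype SA] [Fintype SB] [Fintype S] [Nonempty SA] [Nonempty SB] [Nonempty S]
    (ν : SA → SB → S → ℝ) (hν : IsPMF ν)
    (hAB : ∀ a b, 0 < jAB ν a b) (hY : ∀ y, 0 < prY ν y)
    (hci : CondIndep ν) :
    ∑ a, ∑ b, jAB ν a b * Real.log (∑ y, condA ν a y * condB ν b y / prY ν y)
      = ∑ a, ∑ b, jAB ν a b * Real.log (jAB ν a b / (prA ν a * prB ν b)) := by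
  refine Finset.sum_congr rfl fun a _ => Finset.sum_congr rfl fun b _ => ?_
  have hpa : prA ν a ≠ 0 := by
    have : prA ν a = ∑ b, jAB ν a b := rfl
    rw [this]
    exact ne_of_gt (Finset.sum_pos (fun b _ => hAB a b) Finset.univ_nonempty)
  have hpb : prB ν b ≠ 0 := by
    have : prB ν b = ∑ a, jAB ν a b := rfl
    rw [this]
    exact ne_of_gt (Finset.sum_pos (fun a _ => hAB a b) Finset.univ_nonempty)
  congr 1
  have key : ∀ y, condA ν a y * condB ν b y / prY ν y = ν a b y / (prA ν a * prB ν b) := by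
    intro y
    have hy := (hY y).ne'
    have h := hci a b y
    unfold condA condB
    field_simp at h ⊢
    have h2 : ν a b y * prY ν y = jAY ν a y * jBY ν b y :=
      mul_right_cancel₀ hy (by linear_combination (prY ν y) * h)
    linear_combination (-1 : ℝ) * h2
  rw [Finset.sum_congr rfl fun y _ => key y, ← Finset.sum_div]
  rfl
end
end
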